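/- arXiv:cs/0605070 — 4 statements merged into one kernel-verified Lean document; each statement's English description precedes it below -/
import Mathlib

section
/- Along the linear polygon shortening flow, the quantity H_m(t) = Im((z_{m-1}(t) - z_m(t))·conj(z_{m+1}(t) - z_m(t))) satisfies Ḣ_m = -2H_m + G_m, where G_m = (1/2)·Im((z_{m-2} - z_{m-1})·conj(z_{m+1} - z_m) + (z_{m-1} - z_m)·conj(z_{m+2} - z_{m+1})). -/
open Complex

/-- The centroid of `n` points in the complex plane. -/
noncomputable def centroid (n : ℕ) (z : Fin n → ℂ) : ℂ := (∑ i, z i) / n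

/-- The linear polygon shortening flow: each vertex pursues the centroid of its
two (cyclically) neighbouring vertices. -/
def LinearFlow (n : ℕ) [NeZero n] (z : ℝ → Fin n → ℂ) : Prop :=
  ∀ (t : ℝ) (i : Fin n), HasDerivAt (fun s => z s i)
    ((1/2) * (z t (i + 1) - z t i) + (1/2) * (z t (i - 1) - z t i)) t

/-- Along the linear polygon shortening flow, the quantity
`H_m(t) = Im((z_{m-1} - z_m)·conj(z_{m+1} - z_m))` satisfies `Ḣ_m = -2 H_m + G_m`, where
`G_m = (1/2)·Im((z_{m-2} - z_{m-1})·conj(z_{m+1} - z_m) + (z_{m-1} - z_m)·conj(z_{m+2} - z_{m+1}))`. -/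
theorem H_deriv (n : ℕ) [NeZero n] (hn : 4 ≤ n)
    (z : ℝ → Fin n → ℂ) (hz : LinearFlow n z) (m : Fin n) (t : ℝ) :
    HasDerivAt
      (fun s => ((z s (m - 1) - z s m) * (starRingEnd ℂ) (z s (m + 1) - z s m)).im)
      (-2 * ((z t (m - 1) - z t m) * (starRingEnd ℂ) (z t (m + 1) - z t m)).im +
        (1/2) * ((z t (m - 2) - z t (m - 1)) * (starRingEnd ℂ) (z t (m + 1) - z t m) +
          (z t (m - 1) - z t m) * (starRingEnd ℂ) (z t (m + 2) - z t (m + 1))).im)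
      t := by
  have hf := (hz t (m - 1)).sub (hz t m)
  have hg := (hz t (m + 1)).sub (hz t m)
  have h2 : (1 + 1 : Fin n) = 2 := by
    ext; simp only [Fin.val_add]; rw [Nat.add_mod]; simp
  rw [sub_add_cancel, sub_sub, h2] at hf
  rw [add_sub_cancel_right, add_assoc, h2] at hg
  have hgc : HasDerivAt (fun s => (starRingEnd ℂ) (z s (m + 1) - z s m))
      ((starRingEnd ℂ) (1/2 * (z t (m + 2) - z t (m + 1)) + 1/2 * (z t m - z t (m + 1)) -
        (1/2 * (z t (m + 1) - z t m) + 1/2 * (z t (m - 1) - z t m)))) t :=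
    (Complex.conjCLE : ℂ →L[ℝ] ℂ).hasFDerivAt.comp_hasDerivAt t hg
  have hprod := hf.mul hgc
  have him := (Complex.imCLM.hasFDerivAt.comp_hasDerivAt t hprod)
  refine him.congr_deriv ?_
  simp only [ContinuousLinearMap.coe_coe, imCLM_apply]
  set a := z t (m - 2)
  set b := z t (m - 1)
  set c := z t m
  set d := z t (m + 1)
  set e := z t (m + 2)
  simp only [Complex.mul_im, Complex.add_im, Complex.add_re, Complex.sub_im, Complex.sub_re,
    Complex.mul_re, Complex.conj_re, Complex.conj_im, Complex.ofReal_re, Complex.ofReal_im,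
    Complex.div_im, Complex.div_re, Complex.one_re, Complex.one_im, Complex.neg_im,
    Complex.neg_re, Complex.re_ofNat, Complex.im_ofNat, Complex.normSq_apply]
  norm_num
  ring
end

section
/- If n > 2 distinct points z_1, ..., z_n ∈ ℂ are in a counterclockwise star formation about their centroid, then each of the angles α_i satisfies α_i < π. -/
open Complex

open Fin.NatCast

private lemma sin_nonpos_aux (x : ℝ) (h1 : Real.pi ≤ x) (h2 : x ≤ 2*Real.pi) :
    Real.sin x ≤ 0 := by
  have := Real.sin_nonneg_of_nonneg_of_le_pi (x := x - Real.pi) (by linarith) (by linarith)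
  rw [Real.sin_sub_pi] at this; linarith

private lemma sin_neg_aux (x : ℝ) (h1 : Real.pi < x) (h2 : x < 2*Real.pi) :
    Real.sin x < 0 := by
  have := Real.sin_pos_of_pos_of_lt_pi (x := x - Real.pi) (by linarith) (by linarith)
  rw [Real.sin_sub_pi] at this; linarith

private lemma im_aux (a b : ℝ) (wk : ℂ) :
    ((starRingEnd ℂ) wk * (((a:ℝ):ℂ) * Complex.exp ((b:ℂ) * Complex.I) * wk)).im
      = a * ‖wk‖ ^ 2 * Real.sin b := by
  have h2 : ((‖wk‖ ^ 2 : ℝ) : ℂ) = (starRingEnd ℂ) wk * wk := by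
    rw [← Complex.normSq_eq_norm_sq, Complex.normSq_eq_conj_mul_self]
  have h : (starRingEnd ℂ) wk * (((a:ℝ):ℂ) * Complex.exp ((b:ℂ) * Complex.I) * wk)
      = ((a:ℝ):ℂ) * ((‖wk‖ ^2 : ℝ) : ℂ) * Complex.exp ((b:ℂ) * Complex.I) := by
    rw [h2]; ring
  rw [h, Complex.exp_mul_I]
  simp [Complex.mul_im, ← Complex.ofReal_pow, ← Complex.ofReal_sin, ← Complex.ofReal_cos]

private lemma step_aux (A B C a b : ℝ) (hB : B ≠ 0) (hC : C ≠ 0) (wk x y : ℂ)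
    (hx : x = ((B / C : ℝ) : ℂ) * Complex.exp ((b : ℂ) * Complex.I) * wk)
    (hy : y = ((A / B : ℝ) : ℂ) * Complex.exp ((a : ℂ) * Complex.I) * x) :
    y = ((A / C : ℝ) : ℂ) * Complex.exp (((b + a : ℝ) : ℂ) * Complex.I) * wk := by
  have hB' : (B : ℂ) ≠ 0 := by exact_mod_cast hB
  have hC' : (C : ℂ) ≠ 0 := by exact_mod_cast hC
  rw [hy, hx]
  push_cast
  rw [add_mul, Complex.exp_add]
  field_simp

private lemma reindex_aux {M : Type*} [AddCommMonoid M] (n : ℕ) [NeZero n]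
    (f : Fin n → M) (k : Fin n) :
    ∑ t ∈ Finset.range n, f (k + (t : Fin n)) = ∑ i, f i := by
  rw [← Fin.sum_univ_eq_sum_range (fun t => f (k + (t : Fin n))) n]
  simp only [Fin.cast_val_eq_self]
  exact Equiv.sum_comp (Equiv.addLeft k) f

/-- If `n > 2` distinct points are in a counterclockwise star formation about their
centroid — i.e. each `rᵢ = |zᵢ - z̃| > 0`, each counterclockwise angle `αᵢ` from ray
`z̃→zᵢ` to ray `z̃→z_{i+1}` is positive, and `∑ αᵢ = 2π` — then every `αᵢ < π`. -/
theorem star_angles_lt_pi (n : ℕ) [NeZero n] (hn : 2 < n)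
    (z : Fin n → ℂ) (hdist : ∀ i j : Fin n, i ≠ j → z i ≠ z j)
    (α : Fin n → ℝ)
    (hr : ∀ i, z i ≠ centroid n z)
    (hα : ∀ i, 0 < α i)
    (hsum : (∑ i, α i) = 2 * Real.pi)
    (hrot : ∀ i, z (i + 1) - centroid n z =
      ((‖z (i + 1) - centroid n z‖ / ‖z i - centroid n z‖ : ℝ) : ℂ) *
        Complex.exp ((α i : ℂ) * Complex.I) * (z i - centroid n z)) :
    ∀ i, α i < Real.pi := by
  intro k
  by_contra hk
  push_neg at hk
  set c := centroid n z with hc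
  set w : Fin n → ℂ := fun i => z i - c with hwdef
  have hw0 : ∀ i, w i ≠ 0 := fun i => sub_ne_zero.mpr (hr i)
  have hrpos : ∀ i, 0 < ‖w i‖ := fun i => norm_pos_iff.mpr (hw0 i)
  -- the sum of the w i is zero
  have hsum0 : ∑ i, w i = 0 := by
    have hn0 : (n:ℂ) ≠ 0 := Nat.cast_ne_zero.mpr (NeZero.ne n)
    simp only [hwdef, Finset.sum_sub_distrib, Finset.sum_const, Finset.card_univ,
      Fintype.card_fin, hc, centroid, nsmul_eq_mul]
    field_simp
    ring
  -- cumulative angles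
  set β : ℕ → ℝ := fun m => ∑ t ∈ Finset.range m, α (k + (t : Fin n)) with hβdef
  have hβn : β n = 2 * Real.pi := by
    rw [hβdef]; simpa using (reindex_aux n α k).trans hsum
  have hβmono : ∀ a b : ℕ, a ≤ b → β a ≤ β b := by
    intro a b hab
    exact Finset.sum_le_sum_of_subset_of_nonneg (Finset.range_subset_range.mpr hab)
      (fun j _ _ => (hα _).le)
  have hβlt : ∀ m : ℕ, m < n → β m < 2 * Real.pi := by
    intro m hm
    rw [← hβn]
    exact Finset.sum_lt_sum_of_subset (Finset.range_subset_range.mpr hm.le)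
      (Finset.mem_range.mpr hm) (Finset.notMem_range_self) (hα _)
      (fun j _ _ => (hα _).le)
  have hβ1 : β 1 = α k := by simp [hβdef]
  have hβ2 : β 2 = α k + α (k + 1) := by
    show ∑ t ∈ Finset.range 2, α (k + (t : Fin n)) = _
    rw [Finset.sum_range_succ, Finset.sum_range_one]
    norm_num
  -- the rotation formula, iterated
  have key : ∀ m : ℕ, w (k + (m : Fin n)) =
      ((‖w (k + (m : Fin n))‖ / ‖w k‖ : ℝ) : ℂ) *
        Complex.exp ((β m : ℂ) * Complex.I) * w k := by
    intro m
    induction m with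
    | zero =>
      simp [hβdef, div_self (hrpos k).ne']
    | succ m ih =>
      have heq : k + ((m + 1 : ℕ) : Fin n) = (k + (m : Fin n)) + 1 := by rw [Nat.cast_succ, add_assoc]
      have hstep : w ((k + (m : Fin n)) + 1) =
          ((‖w ((k + (m : Fin n)) + 1)‖ / ‖w (k + (m : Fin n))‖ : ℝ) : ℂ) *
            Complex.exp ((α (k + (m : Fin n)) : ℂ) * Complex.I) * w (k + (m : Fin n)) :=
        hrot (k + (m : Fin n))
      have hβs : β (m + 1) = β m + α (k + (m : Fin n)) := Finset.sum_range_succ _ _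
      rw [heq, hβs]
      exact step_aux _ _ _ _ _ (hrpos (k + (m : Fin n))).ne' (hrpos k).ne' _ _ _ ih hstep
  -- imaginary parts
  set g : ℕ → ℝ := fun m => ((starRingEnd ℂ) (w k) * w (k + (m : Fin n))).im with hgdef
  have hg : ∀ m : ℕ, g m = (‖w (k + (m : Fin n))‖ / ‖w k‖)
      * ‖w k‖ ^ 2 * Real.sin (β m) := by
    intro m
    show ((starRingEnd ℂ) (w k) * w (k + (m : Fin n))).im = _
    conv_lhs => rw [key m]
    exact im_aux _ _ _
  have hgsum : ∑ m ∈ Finset.range n, g m = 0 := by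
    have : ∑ m ∈ Finset.range n, (starRingEnd ℂ) (w k) * w (k + (m : Fin n)) = 0 := by
      rw [← Finset.mul_sum, reindex_aux n w k, hsum0, mul_zero]
    calc ∑ m ∈ Finset.range n, g m
        = (∑ m ∈ Finset.range n, (starRingEnd ℂ) (w k) * w (k + (m : Fin n))).im := by
          rw [Complex.im_sum]
      _ = 0 := by rw [this, Complex.zero_im]
  -- each g m ≤ 0
  have hcoef : ∀ m : ℕ, 0 < (‖w (k + (m : Fin n))‖ / ‖w k‖)
      * ‖w k‖ ^ 2 :=
    fun m => mul_pos (div_pos (hrpos _) (hrpos _)) (pow_pos (hrpos _) 2)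
  have hβub : ∀ m : ℕ, 1 ≤ m → m < n → Real.pi ≤ β m ∧ β m < 2 * Real.pi := by
    intro m h1 h2
    refine ⟨le_trans (le_trans hk hβ1.ge) (hβmono 1 m h1), hβlt m h2⟩
  have hnonpos : ∀ m ∈ Finset.range n, g m ≤ 0 := by
    intro m hm
    rw [hg]
    rcases Nat.eq_zero_or_pos m with h0 | h1
    · subst h0; simp [hβdef]
    · obtain ⟨hl, hu⟩ := hβub m h1 (Finset.mem_range.mp hm)
      exact mul_nonpos_of_nonneg_of_nonpos (hcoef m).le (sin_nonpos_aux _ hl hu.le)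
  -- strict negativity somewhere
  have hstrict : ∃ m ∈ Finset.range n, g m < 0 := by
    rcases lt_or_eq_of_le hk with hlt | heq
    · refine ⟨1, Finset.mem_range.mpr (by omega), ?_⟩
      rw [hg]
      have hu : β 1 < 2 * Real.pi := hβlt 1 (by omega)
      exact mul_neg_of_pos_of_neg (hcoef 1) (sin_neg_aux _ (hβ1 ▸ hlt) hu)
    · refine ⟨2, Finset.mem_range.mpr (by omega), ?_⟩
      rw [hg]
      have hl : Real.pi < β 2 := by rw [hβ2, ← heq]; linarith [hα (k+1)]
      have hu : β 2 < 2 * Real.pi := hβlt 2 (by omega)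
      exact mul_neg_of_pos_of_neg (hcoef 2) (sin_neg_aux _ hl hu)
  obtain ⟨m0, hm0, hm0neg⟩ := hstrict
  have : ∑ m ∈ Finset.range n, g m < 0 := by
    calc ∑ m ∈ Finset.range n, g m < ∑ m ∈ Finset.range n, (0:ℝ) :=
      Finset.sum_lt_sum hnonpos ⟨m0, hm0, hm0neg⟩
    _ = 0 := by simp
  linarith [hgsum]
end

section
/- If an n-gon is strictly convex at t = 0, with vertices numbered counterclockwise, and its vertices evolve according to ż_i = (1/2)(z_{i+1} - z_i) + (1/2)(z_{i-1} - z_i), then the n-gon remains strictly convex for all t ≥ 0. -/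
open Complex

/-- The `n`-gon with distinct vertices `z 0, …, z (n-1)`, numbered counterclockwise,
is strictly convex: every vertex lies strictly to the left of every directed edge
`z i → z (i+1)`. -/
def StrictlyConvexCCW (n : ℕ) [NeZero n] (z : Fin n → ℂ) : Prop :=
  (∀ i j : Fin n, i ≠ j → z i ≠ z j) ∧
  ∀ i j : Fin n, j ≠ i → j ≠ i + 1 →
    0 < ((starRingEnd ℂ) (z (i + 1) - z i) * (z j - z i)).im

namespace PolyAux

/-! ### basic algebra -/

def cross (u v : ℂ) : ℝ := u.re * v.im - u.im * v.re

lemma conj_mul_im (u v : ℂ) : ((starRingEnd ℂ) u * v).im = cross u v := by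
  simp [cross, Complex.mul_im]; ring

def Ftri {m : ℕ} (z : Fin m → ℂ) (a b c : Fin m) : ℝ := cross (z b - z a) (z c - z a)

def AllPairs {m : ℕ} [NeZero m] (z : Fin m → ℂ) : Prop :=
  (∀ i j : Fin m, i ≠ j → z i ≠ z j) ∧
  ∀ i j : Fin m, j ≠ i → j ≠ i + 1 → 0 < Ftri z i (i+1) j

def COrd {m : ℕ} [NeZero m] (a b c : Fin m) : Prop :=
  0 < (b - a).val ∧ (b - a).val < (c - a).val

lemma Ftri_degen1 {m : ℕ} (z : Fin m → ℂ) (a c : Fin m) : Ftri z a a c = 0 := by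
  simp [Ftri, cross]
lemma Ftri_degen2 {m : ℕ} (z : Fin m → ℂ) (a b : Fin m) : Ftri z a b b = 0 := by
  simp [Ftri, cross]; ring
lemma Ftri_degen3 {m : ℕ} (z : Fin m → ℂ) (a b : Fin m) : Ftri z a b a = 0 := by
  simp [Ftri, cross]

lemma bary (P Q R W : ℂ) :
    (cross (Q-P) (R-P) : ℝ) • W
      = (cross (R-Q) (W-Q) : ℝ) • P + (cross (P-R) (W-R) : ℝ) • Q
        + (cross (Q-P) (W-P) : ℝ) • R := by
  apply Complex.ext <;> simp [cross, Complex.smul_re, Complex.smul_im] <;> ring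

lemma bary_sum (P Q R W : ℂ) :
    cross (R-Q) (W-Q) + cross (P-R) (W-R) + cross (Q-P) (W-P) = cross (Q-P) (R-P) := by
  simp [cross]; ring

lemma cross_smul_right (r : ℝ) (u v : ℂ) : cross u (r • v) = r * cross u v := by
  simp [cross, Complex.smul_re, Complex.smul_im]; ring

lemma cross_add_right (u v w : ℂ) : cross u (v + w) = cross u v + cross u w := by
  simp [cross]; ring

lemma neg_flip (P R W : ℂ) : cross (P-R) (W-R) = - cross (R-P) (W-P) := by
  simp [cross]; ring

/-! ### Fin arithmetic -/

section FinArith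
variable {m : ℕ} [NeZero m]

lemma sub_val (a b : Fin m) :
    (b - a).val = if a.val ≤ b.val then b.val - a.val else b.val + m - a.val := by
  have hm : 0 < m := Nat.pos_of_ne_zero (NeZero.ne m)
  have ha := a.isLt
  have hb := b.isLt
  rw [Fin.sub_def]
  simp only []
  split_ifs with h
  · have : m - a.val + b.val = m + (b.val - a.val) := by omega
    rw [this, Nat.add_mod_left, Nat.mod_eq_of_lt (by omega)]
  · rw [Nat.mod_eq_of_lt (by omega)]; omega

lemma add_one_val (hm3 : 1 < m) (a : Fin m) :
    (a + 1).val = if a.val = m - 1 then 0 else a.val + 1 := by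
  have ha := a.isLt
  rw [Fin.add_def]
  show (a.val + (1 : Fin m).val) % m = _
  have h1 : (1 : Fin m).val = 1 % m := rfl
  rw [h1, Nat.mod_eq_of_lt hm3]
  by_cases h : a.val = m - 1
  · rw [if_pos h, h]
    have h4 : m - 1 + 1 = m := by omega
    rw [h4, Nat.mod_self]
  · rw [Nat.mod_eq_of_lt (by omega)]; simp [h]

lemma eq_add_of_sub_val_one (hm3 : 1 < m) {a b : Fin m} (h : (b - a).val = 1) : b = a + 1 := by
  have h2 : b - a = 1 := by
    apply Fin.ext
    rw [h]
    have h1 : (1 : Fin m).val = 1 % m := rfl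
    rw [h1, Nat.mod_eq_of_lt hm3]
  have h3 := sub_add_cancel b a
  rw [← h3, h2]; abel

lemma sub_val_eq_zero_iff {a b : Fin m} : (b - a).val = 0 ↔ b = a := by
  constructor
  · intro h
    have h2 : b - a = 0 := Fin.ext (by simpa using h)
    have h3 := sub_add_cancel b a
    rw [← h3, h2]; abel
  · intro h; subst h; simp

lemma cord_iff {a b c : Fin m} :
    COrd a b c ↔ (a < b ∧ b < c) ∨ (b < c ∧ c < a) ∨ (c < a ∧ a < b) := by
  have ha := a.isLt
  have hb := b.isLt
  have hc := c.isLt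
  unfold COrd
  rw [sub_val a b, sub_val a c, Fin.lt_def, Fin.lt_def, Fin.lt_def]
  split_ifs <;> omega

lemma two_step_ne (hm : 3 ≤ m) (p : Fin m) : p + 1 ≠ p - 1 := by
  intro h
  have h2 : p + 1 + 1 = p := by rw [h, sub_add_cancel]
  have h3 : (p + 1 + 1).val = p.val := by rw [h2]
  have e1 := add_one_val (by omega) p
  have e2 := add_one_val (m := m) (by omega) (p + 1)
  have hp := p.isLt
  rw [e2, e1] at h3
  split_ifs at h3 <;> omega

end FinArith

/-! ### the gap-two lemma -/

lemma gap2 {m : ℕ} [NeZero m] (hm : 3 ≤ m) (z : Fin m → ℂ) (hz : AllPairs z) (p j : Fin m)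
    (h1 : j ≠ p - 1) (h2 : j ≠ p) (h3 : j ≠ p + 1) :
    0 < cross (z (p+1) - z (p-1)) (z j - z (p-1)) := by
  by_contra hle
  push_neg at hle
  set P := z (p-1) with hP
  set Q := z p with hQ
  set R := z (p+1) with hR
  set W := z j with hW
  have hpm : (p - 1) + 1 = p := sub_add_cancel p 1
  have hmuP : 0 < cross (R-Q) (W-Q) := by
    have := hz.2 p j h2 h3
    simpa [Ftri, hQ, hR, hW] using this
  have hmuR : 0 < cross (Q-P) (W-P) := by
    have := hz.2 (p-1) j h1 (by rwa [hpm])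
    simpa [Ftri, hpm, hP, hQ, hW] using this
  have hmuQ : 0 ≤ cross (P-R) (W-R) := by
    rw [neg_flip]
    simpa using hle
  set E := z (j+1) - z j with hE
  have hhQ : 0 < cross E (Q - W) := by
    have := hz.2 j p (Ne.symm h2) (by intro hc; exact h1 (by rw [hc]; simp))
    simpa [Ftri, hE, hQ, hW] using this
  have hhR : 0 < cross E (R - W) := by
    have := hz.2 j (p+1) (Ne.symm h3)
      (by intro hc; exact h2 (add_right_cancel hc).symm)
    simpa [Ftri, hE, hR, hW] using this
  have hhP : 0 ≤ cross E (P - W) := by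
    by_cases hc : p - 1 = j + 1
    · rw [hP, hW, hc]
      have : cross E (z (j+1) - z j) = 0 := by simp [hE, cross]; ring
      rw [this]
    · have := hz.2 j (p-1) (Ne.symm h1) hc
      have h4 : 0 < cross E (P - W) := by simpa [Ftri, hE, hP, hW] using this
      exact le_of_lt h4
  have hcomb : (cross (R-Q) (W-Q) : ℝ) • (P - W) + (cross (P-R) (W-R) : ℝ) • (Q - W)
      + (cross (Q-P) (W-P) : ℝ) • (R - W) = 0 := by
    have hb := bary P Q R W
    have hs := bary_sum P Q R W
    have hx : (cross (R-Q) (W-Q) : ℝ) • (P - W) + (cross (P-R) (W-R) : ℝ) • (Q - W)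
        + (cross (Q-P) (W-P) : ℝ) • (R - W)
        = ((cross (R-Q) (W-Q) : ℝ) • P + (cross (P-R) (W-R) : ℝ) • Q
            + (cross (Q-P) (W-P) : ℝ) • R)
          - ((cross (R-Q) (W-Q) + cross (P-R) (W-R) + cross (Q-P) (W-P) : ℝ)) • W := by
      simp [smul_sub, add_smul]; abel
    rw [hx, hs, ← hb, sub_self]
  have hzero : (0:ℝ) = cross (R-Q) (W-Q) * cross E (P - W)
      + cross (P-R) (W-R) * cross E (Q - W)
      + cross (Q-P) (W-P) * cross E (R - W) := by
    have hcc := congrArg (cross E) hcomb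
    rw [cross_add_right, cross_add_right, cross_smul_right, cross_smul_right,
      cross_smul_right] at hcc
    have h0 : cross E 0 = 0 := by simp [cross]
    rw [h0] at hcc
    linarith [hcc]
  have t3 : 0 < cross (Q-P) (W-P) * cross E (R - W) := mul_pos hmuR hhR
  have t1 : 0 ≤ cross (R-Q) (W-Q) * cross E (P - W) := mul_nonneg hmuP.le hhP
  have t2 : 0 ≤ cross (P-R) (W-R) * cross E (Q - W) := mul_nonneg hmuQ hhQ.le
  linarith

/-! ### deletion of a vertex -/

lemma succAbove_val {m : ℕ} (p : Fin (m+1)) (i : Fin m) :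
    (p.succAbove i).val = if i.val < p.val then i.val else i.val + 1 := by
  rw [Fin.succAbove]
  by_cases h : i.castSucc < p
  · rw [if_pos h, if_pos (by simpa [Fin.lt_def] using h)]
    simp
  · rw [if_neg h, if_neg (by simpa [Fin.lt_def] using h)]
    simp

lemma succAbove_succ_cases {m : ℕ} [NeZero m] (hm : 1 < m) (p : Fin (m+1)) (i : Fin m) :
    p.succAbove (i+1) = p.succAbove i + 1 ∨
    (p.succAbove i + 1 = p ∧ p.succAbove (i+1) = p + 1) := by
  have hp := p.isLt
  have hi := i.isLt
  have e1 := add_one_val (m := m) hm i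
  have e2 := add_one_val (m := m+1) (by omega) (p.succAbove i)
  have e3 := add_one_val (m := m+1) (by omega) p
  have s1 := succAbove_val p i
  have s2 := succAbove_val p (i + 1)
  rw [Fin.ext_iff, Fin.ext_iff, Fin.ext_iff]
  rw [e1] at s2
  rw [s1] at e2
  split_ifs at s1 s2 e2 e3 <;> omega

lemma allPairs_delete {m : ℕ} [NeZero m] (hm : 3 ≤ m) (z : Fin (m+1) → ℂ)
    (hz : AllPairs z) (p : Fin (m+1)) : AllPairs (z ∘ p.succAbove) := by
  constructor
  · intro i j hij hzz
    exact hz.1 _ _ (fun h => hij (p.succAbove_right_injective h)) hzz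
  · intro i j hji hji1
    rcases succAbove_succ_cases (by omega) p i with hcase | ⟨hc1, hc2⟩
    · have heq : Ftri (z ∘ p.succAbove) i (i+1) j
          = Ftri z (p.succAbove i) (p.succAbove i + 1) (p.succAbove j) := by
        simp [Ftri, Function.comp, hcase]
      rw [heq]
      refine hz.2 _ _ (fun h => hji (p.succAbove_right_injective h)) ?_
      rw [← hcase]
      exact fun h => hji1 (p.succAbove_right_injective h)
    · have hpm1 : p.succAbove i = p - 1 := eq_sub_of_add_eq hc1
      have heq : Ftri (z ∘ p.succAbove) i (i+1) j
          = cross (z (p+1) - z (p-1)) (z (p.succAbove j) - z (p-1)) := by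
        unfold Ftri
        simp only [Function.comp_apply]
        rw [hc2, hpm1]
      rw [heq]
      refine gap2 (by omega) z hz p (p.succAbove j) ?_ (Fin.succAbove_ne p j) ?_
      · rw [← hpm1]
        exact fun h => hji (p.succAbove_right_injective h)
      · rw [← hc2]
        exact fun h => hji1 (p.succAbove_right_injective h)

/-! ### static lemma -/

lemma static_main (m : ℕ) (hm : 3 ≤ m) : ∀ [NeZero m], ∀ z : Fin m → ℂ, AllPairs z →
    ∀ a b c : Fin m, COrd a b c → 0 < Ftri z a b c := by
  induction m, hm using Nat.le_induction with
  | base =>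
    intro inst z hz a b c hord
    obtain ⟨h1, h2⟩ := hord
    have hca := (c - a).isLt
    have hb1 : (b - a).val = 1 := by omega
    have hc2 : (c - a).val = 2 := by omega
    have hba : b = a + 1 := eq_add_of_sub_val_one (by omega) hb1
    have hcna : c ≠ a := by
      intro h; rw [← sub_val_eq_zero_iff (a := a) (b := c)] at h; omega
    have hcnb : c ≠ a + 1 := by
      intro h
      rw [h, add_sub_cancel_left] at hc2
      have h5 : (1 : Fin 3).val = 1 := rfl
      omega
    have := hz.2 a c hcna hcnb
    rwa [hba]
  | succ m hm3 ih =>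
    intro inst z hz a b c hord
    haveI hnz : NeZero m := ⟨by omega⟩
    have hex : ∃ p : Fin (m+1), p ≠ a ∧ p ≠ b ∧ p ≠ c := by
      by_contra hall
      push_neg at hall
      have hsub : (Finset.univ : Finset (Fin (m+1))) ⊆ {a, b, c} := by
        intro x _
        by_cases h1 : x = a
        · simp [h1]
        by_cases h2 : x = b
        · simp [h2]
        have h3 := hall x h1 h2
        simp [h3]
      have hcard := Finset.card_le_card hsub
      have h1 : ({a, b, c} : Finset (Fin (m+1))).card ≤ ({b, c} : Finset (Fin (m+1))).card + 1 :=
        Finset.card_insert_le _ _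
      have h2 : ({b, c} : Finset (Fin (m+1))).card ≤ ({c} : Finset (Fin (m+1))).card + 1 :=
        Finset.card_insert_le _ _
      have h3 : ({c} : Finset (Fin (m+1))).card = 1 := Finset.card_singleton _
      rw [Finset.card_univ, Fintype.card_fin] at hcard
      omega
    obtain ⟨p, hpa, hpb, hpc⟩ := hex
    obtain ⟨a', ha'⟩ := Fin.exists_succAbove_eq (Ne.symm hpa)
    obtain ⟨b', hb'⟩ := Fin.exists_succAbove_eq (Ne.symm hpb)
    obtain ⟨c', hc'⟩ := Fin.exists_succAbove_eq (Ne.symm hpc)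
    have hmono := Fin.strictMono_succAbove p
    have hord' : COrd a' b' c' := by
      rw [cord_iff] at hord ⊢
      rw [← ha', ← hb', ← hc'] at hord
      rcases hord with ⟨h1, h2⟩ | ⟨h1, h2⟩ | ⟨h1, h2⟩
      · exact Or.inl ⟨hmono.lt_iff_lt.mp h1, hmono.lt_iff_lt.mp h2⟩
      · exact Or.inr (Or.inl ⟨hmono.lt_iff_lt.mp h1, hmono.lt_iff_lt.mp h2⟩)
      · exact Or.inr (Or.inr ⟨hmono.lt_iff_lt.mp h1, hmono.lt_iff_lt.mp h2⟩)
    have := ih (z ∘ p.succAbove) (allPairs_delete hm3 z hz p) a' b' c' hord'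
    simpa [Ftri, Function.comp, ha', hb', hc'] using this




lemma half_re : (1/2 : ℂ).re = 1/2 := by norm_num
lemma half_im : (1/2 : ℂ).im = 0 := by norm_num

lemma heat_id (A B C A1 A2 B1 B2 C1 C2 : ℂ) :
    cross (((1/2)*(B1 - B) + (1/2)*(B2 - B)) - ((1/2)*(A1 - A) + (1/2)*(A2 - A))) (C - A)
      + cross (B - A) (((1/2)*(C1 - C) + (1/2)*(C2 - C)) - ((1/2)*(A1 - A) + (1/2)*(A2 - A)))
    = (1/2) * (cross (B - A1) (C - A1) + cross (B - A2) (C - A2) + cross (B1 - A) (C - A)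
        + cross (B2 - A) (C - A) + cross (B - A) (C1 - A) + cross (B - A) (C2 - A))
      - 3 * cross (B - A) (C - A) := by
  simp only [cross, Complex.add_re, Complex.add_im, Complex.sub_re, Complex.sub_im,
    Complex.mul_re, Complex.mul_im, half_re, half_im]
  ring

lemma hasDerivAt_re {w : ℝ → ℂ} {w' : ℂ} {t : ℝ} (h : HasDerivAt w w' t) :
    HasDerivAt (fun s => (w s).re) w'.re t := by
  have := (Complex.reCLM.hasFDerivAt (x := w t)).comp_hasDerivAt t h
  exact this

lemma hasDerivAt_im {w : ℝ → ℂ} {w' : ℂ} {t : ℝ} (h : HasDerivAt w w' t) :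
    HasDerivAt (fun s => (w s).im) w'.im t := by
  have := (Complex.imCLM.hasFDerivAt (x := w t)).comp_hasDerivAt t h
  exact this

lemma hasDerivAt_cross {u v : ℝ → ℂ} {u' v' : ℂ} {t : ℝ}
    (hu : HasDerivAt u u' t) (hv : HasDerivAt v v' t) :
    HasDerivAt (fun s => cross (u s) (v s)) (cross u' (v t) + cross (u t) v') t := by
  have h1 := (hasDerivAt_re hu).mul (hasDerivAt_im hv)
  have h2 := (hasDerivAt_im hu).mul (hasDerivAt_re hv)
  have := h1.sub h2
  refine this.congr_deriv ?_
  simp [cross]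
  ring


/-! ### neighbor shifts of ordered triples -/

section Shifts
variable {n : ℕ} [NeZero n]

lemma one_val (hm : 1 < n) : (1 : Fin n).val = 1 := by
  show 1 % n = 1
  exact Nat.mod_eq_of_lt hm

lemma sub_one_val (hm : 1 < n) (k : Fin n) :
    (k - 1).val = if k.val = 0 then n - 1 else k.val - 1 := by
  rw [sub_val, one_val hm]
  have := k.isLt
  split_ifs <;> omega

lemma sub_cancel_eq {a b c : Fin n} (h : c - a = b - a) : c = b := by
  have h1 := sub_add_cancel c a
  have h2 := sub_add_cancel b a
  rw [← h1, ← h2, h]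

lemma sum6_nonneg (hn3 : 3 ≤ n) (w : Fin n → ℂ)
    (hpos : ∀ a b c : Fin n, COrd a b c → 0 < Ftri w a b c)
    (a b c : Fin n) (h : COrd a b c) :
    0 ≤ Ftri w (a+1) b c + Ftri w (a-1) b c + Ftri w a (b+1) c
      + Ftri w a (b-1) c + Ftri w a b (c+1) + Ftri w a b (c-1) := by
  obtain ⟨hb1, hc1⟩ := h
  have hbI := (b - a).isLt
  have hcI := (c - a).isLt
  have hn1 : (1:ℕ) < n := by omega
  -- case 1
  have t1 : 0 ≤ Ftri w (a+1) b c := by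
    by_cases hd : a + 1 = b
    · rw [hd, Ftri_degen1]
    · refine (hpos _ _ _ ?_).le
      have hd' : (b - a).val ≠ 1 := fun hh => hd (eq_add_of_sub_val_one hn1 hh).symm
      have e1 : b - (a+1) = (b - a) - 1 := by abel
      have e2 : c - (a+1) = (c - a) - 1 := by abel
      constructor
      · rw [e1, sub_one_val hn1]; split_ifs <;> omega
      · rw [e1, e2, sub_one_val hn1, sub_one_val hn1]; split_ifs <;> omega
  -- case 2
  have t2 : 0 ≤ Ftri w (a-1) b c := by
    by_cases hd : a - 1 = c
    · rw [← hd, Ftri_degen3]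
    · refine (hpos _ _ _ ?_).le
      have hd' : (c - (a-1)).val ≠ 0 := fun hh => hd (sub_val_eq_zero_iff.mp hh).symm
      have e1 : b - (a-1) = (b - a) + 1 := by abel
      have e2 : c - (a-1) = (c - a) + 1 := by abel
      rw [e2, add_one_val hn1] at hd'
      constructor
      · rw [e1, add_one_val hn1]; split_ifs <;> omega
      · rw [e1, e2, add_one_val hn1, add_one_val hn1]; split_ifs at * <;> omega
  -- case 3
  have t3 : 0 ≤ Ftri w a (b+1) c := by
    by_cases hd : b + 1 = c
    · rw [hd, Ftri_degen2]
    · refine (hpos _ _ _ ?_).le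
      have e1 : (b+1) - a = (b - a) + 1 := by abel
      have hd' : (c - a).val ≠ (b - a).val + 1 := by
        intro hh
        apply hd
        have hx : c - a = (b+1) - a := by
          apply Fin.ext
          rw [hh, e1, add_one_val hn1]
          split_ifs <;> omega
        exact (sub_cancel_eq hx).symm ▸ rfl
      constructor
      · rw [e1, add_one_val hn1]; split_ifs <;> omega
      · rw [e1, add_one_val hn1]; split_ifs <;> omega
  -- case 4
  have t4 : 0 ≤ Ftri w a (b-1) c := by
    by_cases hd : b - 1 = a
    · rw [hd, Ftri_degen1]
    · refine (hpos _ _ _ ?_).le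
      have hd' : (b - a).val ≠ 1 := by
        intro hh
        apply hd
        rw [eq_add_of_sub_val_one hn1 hh]
        abel
      have e1 : (b-1) - a = (b - a) - 1 := by abel
      constructor
      · rw [e1, sub_one_val hn1]; split_ifs <;> omega
      · rw [e1, sub_one_val hn1]; split_ifs <;> omega
  -- case 5
  have t5 : 0 ≤ Ftri w a b (c+1) := by
    by_cases hd : c + 1 = a
    · rw [hd, Ftri_degen3]
    · refine (hpos _ _ _ ?_).le
      have hd' : ((c+1) - a).val ≠ 0 := fun hh => hd (sub_val_eq_zero_iff.mp hh)
      have e2 : (c+1) - a = (c - a) + 1 := by abel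
      rw [e2, add_one_val hn1] at hd'
      constructor
      · exact hb1
      · rw [e2, add_one_val hn1]; split_ifs at * <;> omega
  -- case 6
  have t6 : 0 ≤ Ftri w a b (c-1) := by
    by_cases hd : c - 1 = b
    · rw [hd, Ftri_degen2]
    · refine (hpos _ _ _ ?_).le
      have e1 : (b+1) - a = (b - a) + 1 := by abel
      have hd' : (c - a).val ≠ (b - a).val + 1 := by
        intro hh
        apply hd
        have hx : c - a = (b+1) - a := by
          apply Fin.ext
          rw [hh, e1, add_one_val hn1]
          split_ifs <;> omega
        have : c = b + 1 := sub_cancel_eq hx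
        rw [this]
        abel
      have e2 : (c-1) - a = (c - a) - 1 := by abel
      constructor
      · exact hb1
      · rw [e2, sub_one_val hn1]; split_ifs <;> omega
  linarith

end Shifts

/-! ### dynamics -/

section Dyn
variable {n : ℕ} [NeZero n]

def Sum6 (w : Fin n → ℂ) (a b c : Fin n) : ℝ :=
  Ftri w (a+1) b c + Ftri w (a-1) b c + Ftri w a (b+1) c
    + Ftri w a (b-1) c + Ftri w a b (c+1) + Ftri w a b (c-1)

lemma flow_deriv (z : ℝ → Fin n → ℂ)
    (hz : ∀ (t : ℝ) (i : Fin n), HasDerivAt (fun s => z s i)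
      ((1/2) * (z t (i + 1) - z t i) + (1/2) * (z t (i - 1) - z t i)) t)
    (a b c : Fin n) (t : ℝ) :
    HasDerivAt (fun s => Ftri (z s) a b c)
      ((1/2) * Sum6 (z t) a b c - 3 * Ftri (z t) a b c) t := by
  have hu : HasDerivAt (fun s => z s b - z s a)
      (((1/2) * (z t (b + 1) - z t b) + (1/2) * (z t (b - 1) - z t b))
        - ((1/2) * (z t (a + 1) - z t a) + (1/2) * (z t (a - 1) - z t a))) t :=
    (hz t b).sub (hz t a)
  have hv : HasDerivAt (fun s => z s c - z s a)
      (((1/2) * (z t (c + 1) - z t c) + (1/2) * (z t (c - 1) - z t c))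
        - ((1/2) * (z t (a + 1) - z t a) + (1/2) * (z t (a - 1) - z t a))) t :=
    (hz t c).sub (hz t a)
  have hc := hasDerivAt_cross hu hv
  have hid := heat_id (z t a) (z t b) (z t c) (z t (a+1)) (z t (a-1)) (z t (b+1))
    (z t (b-1)) (z t (c+1)) (z t (c-1))
  rw [hid] at hc
  exact hc

lemma ftri_continuous (z : ℝ → Fin n → ℂ)
    (hz : ∀ (t : ℝ) (i : Fin n), HasDerivAt (fun s => z s i)
      ((1/2) * (z t (i + 1) - z t i) + (1/2) * (z t (i - 1) - z t i)) t)
    (a b c : Fin n) : Continuous (fun s => Ftri (z s) a b c) := by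
  rw [continuous_iff_continuousAt]
  intro t
  exact (flow_deriv z hz a b c t).continuousAt

/-- the key positivity propagation -/
lemma key_pos (hn : 3 ≤ n) (z : ℝ → Fin n → ℂ)
    (hz : ∀ (t : ℝ) (i : Fin n), HasDerivAt (fun s => z s i)
      ((1/2) * (z t (i + 1) - z t i) + (1/2) * (z t (i - 1) - z t i)) t)
    (h0 : ∀ a b c : Fin n, COrd a b c → 0 < Ftri (z 0) a b c) :
    ∀ t : ℝ, 0 ≤ t → ∀ a b c : Fin n, COrd a b c → 0 < Ftri (z t) a b c := by
  by_contra hbad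
  push_neg at hbad
  set Bad : Set ℝ := {s | 0 ≤ s ∧ ∃ τ : Fin n × Fin n × Fin n,
    COrd τ.1 τ.2.1 τ.2.2 ∧ Ftri (z s) τ.1 τ.2.1 τ.2.2 ≤ 0} with hBadDef
  have hBadNe : Bad.Nonempty := by
    obtain ⟨t, ht, a, b, c, hord, hle⟩ := hbad
    exact ⟨t, ht, ⟨a, b, c⟩, hord, hle⟩
  have hBadClosed : IsClosed Bad := by
    have : Bad = Set.Ici (0:ℝ) ∩ ⋃ τ : Fin n × Fin n × Fin n,
        {s | COrd τ.1 τ.2.1 τ.2.2 ∧ Ftri (z s) τ.1 τ.2.1 τ.2.2 ≤ 0} := by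
      ext s
      simp only [hBadDef, Set.mem_setOf_eq, Set.mem_inter_iff, Set.mem_Ici, Set.mem_iUnion]
    rw [this]
    refine isClosed_Ici.inter (isClosed_iUnion_of_finite fun τ => ?_)
    by_cases hτ : COrd τ.1 τ.2.1 τ.2.2
    · have : {s | COrd τ.1 τ.2.1 τ.2.2 ∧ Ftri (z s) τ.1 τ.2.1 τ.2.2 ≤ 0}
          = {s | Ftri (z s) τ.1 τ.2.1 τ.2.2 ≤ 0} := by
        ext s; simp [hτ]
      rw [this]
      exact isClosed_le (ftri_continuous z hz _ _ _) continuous_const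
    · have : {s | COrd τ.1 τ.2.1 τ.2.2 ∧ Ftri (z s) τ.1 τ.2.1 τ.2.2 ≤ 0} = ∅ := by
        ext s; simp [hτ]
      rw [this]; exact isClosed_empty
  have hBddBelow : BddBelow Bad := ⟨0, fun x hx => hx.1⟩
  set t0 := sInf Bad with ht0
  have ht0mem : t0 ∈ Bad := hBadClosed.csInf_mem hBadNe hBddBelow
  have ht0nonneg : 0 ≤ t0 := ht0mem.1
  have ht0pos : 0 < t0 := by
    rcases lt_or_eq_of_le ht0nonneg with h | h
    · exact h
    · exfalso
      obtain ⟨_, τ, hord, hle⟩ := ht0mem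
      rw [← h] at hle
      exact absurd (h0 τ.1 τ.2.1 τ.2.2 hord) (not_lt.mpr hle)
  have hbefore : ∀ s : ℝ, 0 ≤ s → s < t0 → ∀ a b c : Fin n, COrd a b c →
      0 < Ftri (z s) a b c := by
    intro s hs hst a b c hord
    by_contra hle
    have : s ∈ Bad := ⟨hs, ⟨a, b, c⟩, hord, le_of_not_gt hle⟩
    exact absurd (csInf_le hBddBelow this) (not_le.mpr hst)
  obtain ⟨_, ⟨a, b, c⟩, hord, hle⟩ := ht0mem
  -- g := Ftri * exp (3 t) is monotone on [0, t0]
  set g : ℝ → ℝ := fun s => Ftri (z s) a b c * Real.exp (3 * s) with hg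
  have hgd : ∀ s : ℝ, HasDerivAt g
      (((1/2) * Sum6 (z s) a b c - 3 * Ftri (z s) a b c) * Real.exp (3*s)
        + Ftri (z s) a b c * (Real.exp (3*s) * 3)) s := by
    intro s
    have hexp : HasDerivAt (fun y : ℝ => 3*y) 3 s := by
      simpa using (hasDerivAt_id s).const_mul 3
    exact (flow_deriv z hz a b c s).mul ((Real.hasDerivAt_exp (3*s)).comp s hexp)
  have hmono : MonotoneOn g (Set.Icc 0 t0) := by
    apply monotoneOn_of_deriv_nonneg (convex_Icc 0 t0)
    · exact Continuous.continuousOn (by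
        exact ((ftri_continuous z hz a b c).mul ((Real.continuous_exp).comp
          (continuous_const.mul continuous_id))))
    · intro x hx
      exact (hgd x).differentiableAt.differentiableWithinAt
    · intro x hx
      rw [interior_Icc] at hx
      rw [(hgd x).deriv]
      have hxpos : 0 ≤ Sum6 (z x) a b c := by
        apply sum6_nonneg hn _ (fun a' b' c' hord' => hbefore x hx.1.le hx.2 a' b' c' hord')
          _ _ _ hord
      have := Real.exp_pos (3*x)
      nlinarith
  have h1 : g 0 ≤ g t0 := hmono (Set.left_mem_Icc.mpr ht0nonneg)
    (Set.right_mem_Icc.mpr ht0nonneg) ht0nonneg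
  have h2 : 0 < g 0 := by
    have := h0 a b c hord
    simp [hg]
    positivity
  have h3 : g t0 ≤ 0 := by
    have := Real.exp_pos (3 * t0)
    simp only [hg]
    nlinarith
  linarith

end Dyn

end PolyAux

open PolyAux in
/-- A strictly convex `n`-gon (vertices numbered counterclockwise) evolving under the
linear polygon shortening flow remains strictly convex for all `t ≥ 0`. -/
theorem convex_stays_convex (n : ℕ) [NeZero n] (hn : 3 ≤ n)
    (z : ℝ → Fin n → ℂ) (hz : LinearFlow n z)
    (hconv : StrictlyConvexCCW n (z 0)) :
    ∀ t : ℝ, 0 ≤ t → StrictlyConvexCCW n (z t) := by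
  have hn1 : (1:ℕ) < n := by omega
  -- convert hypothesis to AllPairs
  have hAP : AllPairs (z 0) := by
    refine ⟨hconv.1, fun i j hji hji1 => ?_⟩
    have := hconv.2 i j hji hji1
    rwa [conj_mul_im] at this
  have h0 : ∀ a b c : Fin n, COrd a b c → 0 < Ftri (z 0) a b c :=
    static_main n hn (z 0) hAP
  have key := key_pos hn z hz h0
  intro t ht
  constructor
  · -- distinctness
    intro i j hij hzz
    -- find k different from i and j
    have hex : ∃ k : Fin n, k ≠ i ∧ k ≠ j := by
      by_contra hall
      push_neg at hall
      have hsub : (Finset.univ : Finset (Fin n)) ⊆ {i, j} := by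
        intro x _
        by_cases h1 : x = i
        · simp [h1]
        · simp [hall x h1]
      have hcard := Finset.card_le_card hsub
      have h1 : ({i, j} : Finset (Fin n)).card ≤ ({j} : Finset (Fin n)).card + 1 :=
        Finset.card_insert_le _ _
      rw [Finset.card_univ, Fintype.card_fin] at hcard
      have := Finset.card_singleton j
      omega
    obtain ⟨k, hki, hkj⟩ := hex
    have hji : (j - i).val ≠ 0 := fun hh => hij (sub_val_eq_zero_iff.mp hh).symm
    have hki' : (k - i).val ≠ 0 := fun hh => hki (sub_val_eq_zero_iff.mp hh)
    have hkj' : (j - i).val ≠ (k - i).val := by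
      intro hh
      exact hkj (sub_cancel_eq (Fin.ext hh)).symm
    rcases Nat.lt_or_ge (j - i).val (k - i).val with hlt | hge
    · have := key t ht i j k ⟨by omega, hlt⟩
      rw [Ftri] at this
      rw [hzz] at this
      simp [cross] at this
    · have := key t ht i k j ⟨by omega, by omega⟩
      rw [Ftri] at this
      rw [hzz] at this
      simp [cross] at this
  · -- convexity inequality
    intro i j hji hji1
    have h1v : ((i+1) - i).val = 1 := by
      rw [add_sub_cancel_left, one_val hn1]
    have hjv : 1 < (j - i).val := by
      have h0' : (j - i).val ≠ 0 := fun hh => hji (sub_val_eq_zero_iff.mp hh)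
      have h1' : (j - i).val ≠ 1 := fun hh => hji1 (eq_add_of_sub_val_one hn1 hh)
      omega
    have := key t ht i (i+1) j ⟨by omega, by omega⟩
    rwa [conj_mul_im]
end

section
/- Consider an n-gon with distinct adjacent vertices evolving under ż_i = (1/2)(z_{i+1} - z_i) + (1/2)(z_{i-1} - z_i). At any time at which adjacent vertices are distinct, the perimeter P(t) = ∑|z_{i+1} - z_i| satisfies Ṗ(t) < 0; if adjacent vertices remain distinct for all time, P(t) is strictly monotonically decreasing and tends to 0 as t → ∞. -/
open scoped RealInnerProductSpace

section AuxPolygon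

open Fin.NatCast Fin.CommRing

lemma hasDerivAt_norm_comp {f : ℝ → ℂ} {f' : ℂ} {x : ℝ} (hf : HasDerivAt f f' x)
    (h : f x ≠ 0) : HasDerivAt (fun s => ‖f s‖) (⟪f x, f'⟫ / ‖f x‖) x := by
  have hne : ‖f x‖ ^ 2 ≠ 0 := pow_ne_zero 2 (norm_ne_zero_iff.mpr h)
  have h2 := (Real.hasDerivAt_sqrt hne).comp x hf.norm_sq
  have heq : (fun s => Real.sqrt (‖f s‖ ^ 2)) = fun s => ‖f s‖ := by
    funext s; exact Real.sqrt_sq (norm_nonneg _)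
  rw [Function.comp_def, heq] at h2
  refine h2.congr_deriv ?_
  rw [Real.sqrt_sq (norm_nonneg _)]
  field_simp

variable (n : ℕ) [NeZero n]

lemma exists_strict_index (w : Fin n → ℂ) (hw : ∀ i, w i ≠ 0)
    (hs : ∑ i, w i = 0) : ∃ i : Fin n, ⟪w i, w (i + 1)⟫ < ‖w i‖ * ‖w (i + 1)‖ := by
  by_contra hc
  push_neg at hc
  have heq : ∀ i : Fin n, ‖w (i + 1)‖ • w i = ‖w i‖ • w (i + 1) := by
    intro i
    exact inner_eq_norm_mul_iff_real.mp (le_antisymm (real_inner_le_norm _ _) (hc i))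
  have key : ∀ m : ℕ, ‖w ((m : Fin n))‖ • w 0 = ‖w 0‖ • w ((m : Fin n)) := by
    intro m
    induction m with
    | zero => simp
    | succ m ih =>
      have hcast : ((m + 1 : ℕ) : Fin n) = (m : Fin n) + 1 := by push_cast; ring
      rw [hcast]
      have h1 := heq (m : Fin n)
      have hmn : ‖w ((m : Fin n))‖ ≠ 0 := norm_ne_zero_iff.mpr (hw _)
      apply smul_right_injective ℂ hmn
      calc ‖w (m : Fin n)‖ • ‖w ((m : Fin n) + 1)‖ • w 0
          = ‖w ((m : Fin n) + 1)‖ • (‖w (m : Fin n)‖ • w 0) := smul_comm _ _ _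
        _ = ‖w ((m : Fin n) + 1)‖ • (‖w 0‖ • w (m : Fin n)) := by rw [ih]
        _ = ‖w 0‖ • (‖w ((m : Fin n) + 1)‖ • w (m : Fin n)) := smul_comm _ _ _
        _ = ‖w 0‖ • (‖w (m : Fin n)‖ • w ((m : Fin n) + 1)) := by rw [h1]
        _ = ‖w (m : Fin n)‖ • ‖w 0‖ • w ((m : Fin n) + 1) := smul_comm _ _ _
  have key' : ∀ i : Fin n, ‖w i‖ • w 0 = ‖w 0‖ • w i := by
    intro i
    simpa [Fin.cast_val_eq_self] using key i.val
  have hsum : (∑ i, ‖w i‖) • w 0 = 0 := by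
    rw [Finset.sum_smul]
    calc ∑ i, ‖w i‖ • w 0 = ∑ i, ‖w 0‖ • w i := Finset.sum_congr rfl fun i _ => key' i
      _ = ‖w 0‖ • ∑ i, w i := (Finset.smul_sum).symm
      _ = 0 := by rw [hs, smul_zero]
  rcases smul_eq_zero.mp hsum with h | h
  · have h0 : ‖w 0‖ = 0 :=
      (Finset.sum_eq_zero_iff_of_nonneg (fun i _ => norm_nonneg (w i))).mp h 0
        (Finset.mem_univ _)
    exact hw 0 (norm_eq_zero.mp h0)
  · exact hw 0 h

lemma telescope_bound (w : Fin n → ℂ) (i j : Fin n) :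
    ‖w j - w i‖ ≤ ∑ k : Fin n, ‖w (k + 1) - w k‖ := by
  have step : ∀ m : ℕ, ‖w (i + (m : Fin n)) - w i‖ ≤
      ∑ l ∈ Finset.range m, ‖w (i + (l : Fin n) + 1) - w (i + (l : Fin n))‖ := by
    intro m
    induction m with
    | zero => simp
    | succ m ih =>
      rw [Finset.sum_range_succ]
      have hcast : ((m + 1 : ℕ) : Fin n) = (m : Fin n) + 1 := by push_cast; ring
      calc ‖w (i + ((m + 1 : ℕ) : Fin n)) - w i‖
          = ‖(w (i + (m : Fin n) + 1) - w (i + (m : Fin n))) + (w (i + (m : Fin n)) - w i)‖ := by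
            rw [hcast, ← add_assoc]; ring_nf
        _ ≤ ‖w (i + (m : Fin n) + 1) - w (i + (m : Fin n))‖ + ‖w (i + (m : Fin n)) - w i‖ :=
            norm_add_le _ _
        _ ≤ _ := by rw [add_comm]; exact add_le_add ih le_rfl
  obtain ⟨m, hmn, hm⟩ : ∃ m : ℕ, m ≤ n ∧ j = i + (m : Fin n) :=
    ⟨(j - i).val, le_of_lt (j - i).isLt, by rw [Fin.cast_val_eq_self]; ring⟩
  calc ‖w j - w i‖ ≤ ∑ l ∈ Finset.range m,
        ‖w (i + (l : Fin n) + 1) - w (i + (l : Fin n))‖ := by rw [hm]; exact step m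
    _ ≤ ∑ k : Fin n, ‖w (k + 1) - w k‖ := by
      have hinj : Set.InjOn (fun l : ℕ => i + (l : Fin n)) (Finset.range m) := by
        intro a ha b hb hab
        simp only [Finset.coe_range, Set.mem_Iio] at ha hb
        have h1 : ((a : Fin n)) = (b : Fin n) := add_left_cancel hab
        have h2 := congrArg Fin.val h1
        rwa [Fin.val_cast_of_lt (lt_of_lt_of_le ha hmn),
          Fin.val_cast_of_lt (lt_of_lt_of_le hb hmn)] at h2
      rw [← Finset.sum_image (f := fun k : Fin n => ‖w (k + 1) - w k‖)
        (fun a ha b hb => hinj ha hb)]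
      exact Finset.sum_le_sum_of_subset_of_nonneg (Finset.subset_univ _)
        (fun k _ _ => norm_nonneg _)

lemma pointwise_bound (w : Fin n → ℂ) (hs : ∑ i, w i = 0) (i : Fin n) :
    ‖w i‖ ≤ ∑ k : Fin n, ‖w (k + 1) - w k‖ := by
  have h1 : (n : ℂ) • w i = ∑ j : Fin n, (w i - w j) := by
    rw [Finset.sum_sub_distrib, hs, sub_zero, Finset.sum_const, Finset.card_univ,
      Fintype.card_fin, ← Nat.cast_smul_eq_nsmul ℂ]
  have h2 : (n : ℝ) * ‖w i‖ ≤ (n : ℝ) * ∑ k : Fin n, ‖w (k + 1) - w k‖ := by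
    calc (n : ℝ) * ‖w i‖ = ‖(n : ℂ) • w i‖ := by
          rw [norm_smul]; simp
      _ = ‖∑ j : Fin n, (w i - w j)‖ := by rw [h1]
      _ ≤ ∑ j : Fin n, ‖w i - w j‖ := norm_sum_le _ _
      _ ≤ ∑ j : Fin n, ∑ k : Fin n, ‖w (k + 1) - w k‖ := by
          refine Finset.sum_le_sum fun j _ => ?_
          rw [norm_sub_rev]
          exact telescope_bound n w i j
      _ = (n : ℝ) * ∑ k : Fin n, ‖w (k + 1) - w k‖ := by
          rw [Finset.sum_const, Finset.card_univ, Fintype.card_fin, nsmul_eq_mul]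
  have hn : (0 : ℝ) < n := by exact_mod_cast Nat.pos_of_ne_zero (NeZero.ne n)
  exact le_of_mul_le_mul_left h2 hn

lemma sq_sum_bound (w : Fin n → ℂ) (hs : ∑ i, w i = 0) :
    ∑ i : Fin n, ‖w i‖ ^ 2 ≤ (n : ℝ) ^ 2 * ∑ k : Fin n, ‖w (k + 1) - w k‖ ^ 2 := by
  set S := ∑ k : Fin n, ‖w (k + 1) - w k‖ with hS
  set D := ∑ k : Fin n, ‖w (k + 1) - w k‖ ^ 2 with hD
  have hSD : S ^ 2 ≤ (n : ℝ) * D := by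
    have h := sq_sum_le_card_mul_sum_sq (s := (Finset.univ : Finset (Fin n)))
      (f := fun k : Fin n => ‖w (k + 1) - w k‖)
    simpa [Finset.card_univ] using h
  calc ∑ i : Fin n, ‖w i‖ ^ 2 ≤ ∑ _i : Fin n, S ^ 2 := by
        refine Finset.sum_le_sum fun i _ => ?_
        exact pow_le_pow_left₀ (norm_nonneg _) (pointwise_bound n w hs i) 2
    _ = (n : ℝ) * S ^ 2 := by
        rw [Finset.sum_const, Finset.card_univ, Fintype.card_fin, nsmul_eq_mul]
    _ ≤ (n : ℝ) * ((n : ℝ) * D) := by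
        have hSnn : (0 : ℝ) ≤ S := Finset.sum_nonneg fun k _ => norm_nonneg _
        exact mul_le_mul_of_nonneg_left hSD (by positivity)
    _ = (n : ℝ) ^ 2 * D := by ring

lemma inner_half_expand (a b c : ℂ) :
    ⟪a, (1/2 : ℂ) * b + (1/2 : ℂ) * c - a⟫ =
      (1/2 : ℝ) * ⟪a, b⟫ + (1/2 : ℝ) * ⟪a, c⟫ - ‖a‖ ^ 2 := by
  have hb : (1/2 : ℂ) * b = (1/2 : ℝ) • b := by
    rw [Complex.real_smul]; norm_num
  have hc : (1/2 : ℂ) * c = (1/2 : ℝ) • c := by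
    rw [Complex.real_smul]; norm_num
  rw [inner_sub_right, inner_add_right, hb, hc, real_inner_smul_right,
    real_inner_smul_right, real_inner_self_eq_norm_sq]

end AuxPolygon



open Complex

/-- Under the linear polygon shortening flow with adjacent vertices remaining distinct,
the perimeter `P(t) = ∑ |z_{i+1} - z_i|` has strictly negative derivative at every time,
is strictly monotonically decreasing, and tends to `0` as `t → ∞`. -/
theorem perimeter_decreases (n : ℕ) [NeZero n] (hn : 2 ≤ n)
    (z : ℝ → Fin n → ℂ) (hz : LinearFlow n z)
    (hadj : ∀ (t : ℝ) (i : Fin n), z t (i + 1) ≠ z t i) :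
    (∀ t : ℝ, ∃ d : ℝ, d < 0 ∧
      HasDerivAt (fun s => ∑ i : Fin n, ‖z s (i + 1) - z s i‖) d t) ∧
    StrictAnti (fun t : ℝ => ∑ i : Fin n, ‖z t (i + 1) - z t i‖) ∧
    Filter.Tendsto (fun t : ℝ => ∑ i : Fin n, ‖z t (i + 1) - z t i‖)
      Filter.atTop (nhds 0) := by
  -- edge vectors and their derivatives
  have hwd : ∀ (t : ℝ) (i : Fin n), HasDerivAt (fun s => z s (i + 1) - z s i)
      ((1/2 : ℂ) * (z t (i + 1 + 1) - z t (i + 1)) + (1/2 : ℂ) * (z t i - z t (i - 1))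
        - (z t (i + 1) - z t i)) t := by
    intro t i
    have h := (hz t (i + 1)).sub (hz t i)
    refine h.congr_deriv ?_
    have e1 : i + 1 - 1 = i := add_sub_cancel_right i 1
    rw [e1]
    ring
  have hvne : ∀ (t : ℝ) (i : Fin n), z t (i + 1) - z t i ≠ 0 :=
    fun t i => sub_ne_zero_of_ne (hadj t i)
  have hvsum : ∀ t : ℝ, ∑ i : Fin n, (z t (i + 1) - z t i) = 0 := by
    intro t
    rw [Finset.sum_sub_distrib]
    rw [Fintype.sum_equiv (Equiv.addRight (1 : Fin n)) (fun i => z t (i + 1))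
      (fun i => z t i) (fun i => rfl)]
    exact sub_self _
  -- Part 1: derivative exists & negative
  have hderiv : ∀ t : ℝ, ∃ d : ℝ, d < 0 ∧
      HasDerivAt (fun s => ∑ i : Fin n, ‖z s (i + 1) - z s i‖) d t := by
    intro t
    set v : Fin n → ℂ := fun i => z t (i + 1) - z t i with hv
    have hvaux : ∀ i : Fin n, v (i + 1) = z t (i + 1 + 1) - z t (i + 1) := fun i => rfl
    have hvm : ∀ i : Fin n, v (i - 1) = z t i - z t (i - 1) := by
      intro i
      have : i - 1 + 1 = i := sub_add_cancel i 1
      simp only [hv, this]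
    set d : Fin n → ℝ := fun i =>
      ⟪v i, (1/2 : ℂ) * v (i + 1) + (1/2 : ℂ) * v (i - 1) - v i⟫ / ‖v i‖ with hd
    have hdi : ∀ i : Fin n, HasDerivAt (fun s => ‖z s (i + 1) - z s i‖) (d i) t := by
      intro i
      have := hasDerivAt_norm_comp (hwd t i) (hvne t i)
      convert this using 2
      rw [hvaux, hvm]
    have hsum : HasDerivAt (fun s => ∑ i : Fin n, ‖z s (i + 1) - z s i‖) (∑ i, d i) t :=
      HasDerivAt.fun_sum fun i _ => hdi i
    refine ⟨∑ i, d i, ?_, hsum⟩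
    set g : Fin n → ℝ := fun i => (1/2) * ‖v (i + 1)‖ + (1/2) * ‖v (i - 1)‖ - ‖v i‖ with hg
    have hgsum : ∑ i, g i = 0 := by
      have r1 : ∑ i : Fin n, ‖v (i + 1)‖ = ∑ i : Fin n, ‖v i‖ :=
        Fintype.sum_equiv (Equiv.addRight (1 : Fin n)) _ _ fun i => rfl
      have r2 : ∑ i : Fin n, ‖v (i - 1)‖ = ∑ i : Fin n, ‖v i‖ :=
        Fintype.sum_equiv (Equiv.subRight (1 : Fin n)) _ _ fun i => rfl
      calc ∑ i, g i
          = (1/2) * ∑ i : Fin n, ‖v (i + 1)‖ + (1/2) * ∑ i : Fin n, ‖v (i - 1)‖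
            - ∑ i : Fin n, ‖v i‖ := by
            simp only [hg, Finset.sum_sub_distrib, Finset.sum_add_distrib, Finset.mul_sum]
      _ = 0 := by rw [r1, r2]; ring
    have hpos : ∀ i : Fin n, (0 : ℝ) < ‖v i‖ := fun i => norm_pos_iff.mpr (hvne t i)
    have hle : ∀ i ∈ Finset.univ, d i ≤ g i := by
      intro i _
      rw [hd]
      rw [div_le_iff₀ (hpos i), inner_half_expand]
      simp only [hg]
      have h1 := real_inner_le_norm (v i) (v (i + 1))
      have h2 := real_inner_le_norm (v i) (v (i - 1))
      nlinarith [hpos i, norm_nonneg (v (i + 1)), norm_nonneg (v (i - 1)), h1, h2]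
    obtain ⟨i₀, hi₀⟩ := exists_strict_index n v (hvne t) (hvsum t)
    have hlt : d i₀ < g i₀ := by
      rw [hd]
      rw [div_lt_iff₀ (hpos i₀), inner_half_expand]
      simp only [hg]
      have h2 := real_inner_le_norm (v i₀) (v (i₀ - 1))
      nlinarith [hpos i₀, norm_nonneg (v (i₀ + 1)), norm_nonneg (v (i₀ - 1)), hi₀, h2]
    calc ∑ i, d i < ∑ i, g i :=
          Finset.sum_lt_sum hle ⟨i₀, Finset.mem_univ _, hlt⟩
      _ = 0 := hgsum
  refine ⟨hderiv, ?_, ?_⟩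
  · -- StrictAnti
    apply strictAnti_of_deriv_neg
    intro x
    obtain ⟨d, hdneg, hdd⟩ := hderiv x
    rw [hdd.deriv]
    exact hdneg
  · -- Tendsto 0
    set v : ℝ → Fin n → ℂ := fun t i => z t (i + 1) - z t i with hv
    have hvm : ∀ (t : ℝ) (i : Fin n), v t (i - 1) = z t i - z t (i - 1) := by
      intro t i
      have e : i - 1 + 1 = i := sub_add_cancel i 1
      simp only [hv, e]
    set Q : ℝ → ℝ := fun s => ∑ i : Fin n, ‖v s i‖ ^ 2 with hQ
    have hQd : ∀ t : ℝ, HasDerivAt Q (-∑ i : Fin n, ‖v t (i + 1) - v t i‖ ^ 2) t := by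
      intro t
      have hsum : HasDerivAt Q (∑ i : Fin n,
          2 * ⟪v t i, (1/2 : ℂ) * v t (i + 1) + (1/2 : ℂ) * v t (i - 1) - v t i⟫) t := by
        apply HasDerivAt.fun_sum
        intro i _
        have h := (hwd t i).norm_sq
        refine h.congr_deriv ?_
        rw [hvm]
      convert hsum using 1
      set A := ∑ i : Fin n, ⟪v t i, v t (i + 1)⟫ with hA
      set B := ∑ i : Fin n, ‖v t i‖ ^ 2 with hB
      have rcomm : ∑ i : Fin n, ⟪v t (i + 1), v t i⟫ = A := by
        rw [hA]
        exact Finset.sum_congr rfl fun i _ => real_inner_comm _ _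
      have r3 : ∑ i : Fin n, ⟪v t i, v t (i - 1)⟫ = A := by
        rw [← rcomm]
        exact (Fintype.sum_equiv (Equiv.addRight (1 : Fin n))
          (fun i => ⟪v t (i + 1), v t i⟫) (fun i => ⟪v t i, v t (i - 1)⟫)
          (fun i => by simp)).symm
      have r4 : ∑ i : Fin n, ‖v t (i + 1)‖ ^ 2 = B :=
        Fintype.sum_equiv (Equiv.addRight (1 : Fin n)) _ _ fun i => rfl
      have lhs_eq : -∑ i : Fin n, ‖v t (i + 1) - v t i‖ ^ 2 = -(B - 2 * A + B) := by
        congr 1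
        calc ∑ i : Fin n, ‖v t (i + 1) - v t i‖ ^ 2
            = ∑ i : Fin n, (‖v t (i + 1)‖ ^ 2 - 2 * ⟪v t (i + 1), v t i⟫ + ‖v t i‖ ^ 2) :=
              Finset.sum_congr rfl fun i _ => norm_sub_sq_real _ _
          _ = ∑ i : Fin n, ‖v t (i + 1)‖ ^ 2 - 2 * ∑ i : Fin n, ⟪v t (i + 1), v t i⟫
              + ∑ i : Fin n, ‖v t i‖ ^ 2 := by
              rw [Finset.sum_add_distrib, Finset.sum_sub_distrib, ← Finset.mul_sum]
          _ = B - 2 * A + B := by rw [r4, rcomm, ← hB]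
      have rhs_eq : ∑ i : Fin n,
          2 * ⟪v t i, (1/2 : ℂ) * v t (i + 1) + (1/2 : ℂ) * v t (i - 1) - v t i⟫
          = A + A - 2 * B := by
        calc ∑ i : Fin n, 2 * ⟪v t i, (1/2 : ℂ) * v t (i + 1) + (1/2 : ℂ) * v t (i - 1) - v t i⟫
            = ∑ i : Fin n, (⟪v t i, v t (i + 1)⟫ + ⟪v t i, v t (i - 1)⟫ - 2 * ‖v t i‖ ^ 2) :=
              Finset.sum_congr rfl fun i _ => by rw [inner_half_expand]; ring
          _ = ∑ i : Fin n, ⟪v t i, v t (i + 1)⟫ + ∑ i : Fin n, ⟪v t i, v t (i - 1)⟫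
              - 2 * ∑ i : Fin n, ‖v t i‖ ^ 2 := by
              rw [Finset.sum_sub_distrib, Finset.sum_add_distrib, ← Finset.mul_sum]
          _ = A + A - 2 * B := by rw [r3, ← hA, ← hB]
      rw [lhs_eq, rhs_eq]
      ring
    have hQD : ∀ t : ℝ, Q t ≤ (n : ℝ) ^ 2 * ∑ i : Fin n, ‖v t (i + 1) - v t i‖ ^ 2 :=
      fun t => sq_sum_bound n (v t) (hvsum t)
    set c : ℝ := ((n : ℝ) ^ 2)⁻¹ with hc
    have hnpos : (0 : ℝ) < n := by
      have := Nat.pos_of_ne_zero (NeZero.ne n); exact_mod_cast this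
    have hcpos : 0 < c := by positivity
    have hcn : c * (n : ℝ) ^ 2 = 1 := inv_mul_cancel₀ (by positivity)
    set G : ℝ → ℝ := fun s => Q s * Real.exp (c * s) with hG
    have hGd : ∀ t : ℝ, HasDerivAt G
        ((-∑ i : Fin n, ‖v t (i + 1) - v t i‖ ^ 2) * Real.exp (c * t)
          + Q t * (Real.exp (c * t) * c)) t := by
      intro t
      have hexp : HasDerivAt (fun s : ℝ => Real.exp (c * s)) (Real.exp (c * t) * c) t := by
        simpa using ((hasDerivAt_id t).const_mul c).exp
      exact (hQd t).mul hexp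
    have hGanti : Antitone G := by
      apply antitone_of_deriv_nonpos (fun t => (hGd t).differentiableAt)
      intro t
      rw [(hGd t).deriv]
      set D := ∑ i : Fin n, ‖v t (i + 1) - v t i‖ ^ 2 with hD
      have h1 : Q t * c ≤ ((n : ℝ) ^ 2 * D) * c :=
        mul_le_mul_of_nonneg_right (hQD t) hcpos.le
      have h2 : ((n : ℝ) ^ 2 * D) * c = D := by
        rw [mul_comm ((n:ℝ)^2) D, mul_assoc, mul_comm ((n:ℝ)^2) c, hcn, mul_one]
      nlinarith [Real.exp_pos (c * t), h1, h2]
    have hQnn : ∀ t : ℝ, 0 ≤ Q t := fun t => Finset.sum_nonneg fun i _ => sq_nonneg _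
    have hbound : ∀ t : ℝ, 0 ≤ t → Q t ≤ Q 0 * Real.exp (-(c * t)) := by
      intro t ht
      have hGle : G t ≤ G 0 := hGanti ht
      have hG0 : G 0 = Q 0 := by simp [hG]
      have := mul_le_mul_of_nonneg_right hGle (Real.exp_pos (-(c * t))).le
      rw [hG0] at this
      calc Q t = Q t * Real.exp (c * t) * Real.exp (-(c * t)) := by
            rw [mul_assoc, ← Real.exp_add, add_neg_cancel, Real.exp_zero, mul_one]
        _ ≤ Q 0 * Real.exp (-(c * t)) := this
    have hQtend : Filter.Tendsto Q Filter.atTop (nhds 0) := by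
      apply squeeze_zero' (Filter.Eventually.of_forall hQnn)
        (Filter.eventually_atTop.mpr ⟨0, fun t ht => hbound t ht⟩)
      have h1 : Filter.Tendsto (fun t : ℝ => c * t) Filter.atTop Filter.atTop :=
        Filter.Tendsto.const_mul_atTop hcpos Filter.tendsto_id
      have h2 : Filter.Tendsto (fun t : ℝ => Real.exp (-(c * t))) Filter.atTop (nhds 0) :=
        Real.tendsto_exp_neg_atTop_nhds_zero.comp h1
      simpa using h2.const_mul (Q 0)
    have hPbound : ∀ t : ℝ, ∑ i : Fin n, ‖z t (i + 1) - z t i‖ ≤ (n : ℝ) * Real.sqrt (Q t) := by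
      intro t
      calc ∑ i : Fin n, ‖z t (i + 1) - z t i‖ ≤ ∑ _i : Fin n, Real.sqrt (Q t) := by
            refine Finset.sum_le_sum fun i _ => ?_
            have h1 : ‖v t i‖ ^ 2 ≤ Q t :=
              Finset.single_le_sum (fun j _ => sq_nonneg ‖v t j‖) (Finset.mem_univ i)
            have := Real.sqrt_le_sqrt h1
            rwa [Real.sqrt_sq (norm_nonneg _)] at this
        _ = (n : ℝ) * Real.sqrt (Q t) := by
            rw [Finset.sum_const, Finset.card_univ, Fintype.card_fin, nsmul_eq_mul]
    have hsqrt : Filter.Tendsto (fun t : ℝ => (n : ℝ) * Real.sqrt (Q t))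
        Filter.atTop (nhds 0) := by
      have h1 : Filter.Tendsto (fun t : ℝ => Real.sqrt (Q t)) Filter.atTop (nhds 0) := by
        have := (Real.continuous_sqrt.tendsto' 0 0 Real.sqrt_zero).comp hQtend
        exact this
      simpa using h1.const_mul (n : ℝ)
    exact squeeze_zero (fun t => Finset.sum_nonneg fun i _ => norm_nonneg _) hPbound hsqrt
end
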